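/- With S(l) = (1/2)·(√(1 − 2κ(l))/κ(l) − 1) and κ(l) = cosh(√(4πl)/3^{1/4}) − 1, one has 2π·l·√(S(l))·√(1 + S(l)) → √3/2 as l → 0⁺; that is, the hyperbolic area 2π·l·sinh(r_max(l))·cosh(r_max(l)) of the boundary torus of the maximal tube around a closed geodesic of real length l tends to √3/2 as l → 0⁺. -/

import Mathlib

open Real Filter Topology

/-- Meyerhoff's function κ(l) = cosh(√(4πl)/3^{1/4}) − 1. -/
noncomputable def kappa (l : ℝ) : ℝ :=
  Real.cosh (Real.sqrt (4 * Real.pi * l) / (3 : ℝ) ^ ((1 : ℝ) / 4)) - 1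

/-- S(l) = (1/2)(√(1 − 2κ(l))/κ(l) − 1), so that sinh² r_max(l) = S(l). -/
noncomputable def Sfun (l : ℝ) : ℝ :=
  (1 / 2) * (Real.sqrt (1 - 2 * kappa l) / kappa l - 1)

lemma sinh_div_self_tendsto : Tendsto (fun y : ℝ => Real.sinh y / y) (𝓝[≠] (0:ℝ)) (𝓝 1) := by
  have h := Real.hasDerivAt_sinh (0:ℝ)
  rw [hasDerivAt_iff_tendsto_slope] at h
  simpa [slope_fun_def, Real.sinh_zero, Real.cosh_zero, div_eq_inv_mul] using h

noncomputable def yfun (l : ℝ) : ℝ :=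
  Real.sqrt (4 * Real.pi * l) / (3 : ℝ) ^ ((1 : ℝ) / 4) / 2

lemma three_pow_sq : ((3:ℝ) ^ ((1:ℝ)/4)) ^ 2 = Real.sqrt 3 := by
  rw [← Real.rpow_natCast ((3:ℝ) ^ ((1:ℝ)/4)) 2, ← Real.rpow_mul (by norm_num : (0:ℝ) ≤ 3),
    Real.sqrt_eq_rpow]
  norm_num

lemma yfun_sq (l : ℝ) (hl : 0 < l) : 2 * Real.pi * l = 2 * Real.sqrt 3 * (yfun l) ^ 2 := by
  have h4 : (0:ℝ) ≤ 4 * Real.pi * l := by positivity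
  have h3 : (0:ℝ) < Real.sqrt 3 := by positivity
  have : (yfun l) ^ 2 = (4 * Real.pi * l) / (Real.sqrt 3 * 4) := by
    rw [yfun]
    rw [div_pow, div_pow, Real.sq_sqrt h4, three_pow_sq]
    ring
  rw [this]; field_simp

lemma kappa_eq (l : ℝ) : kappa l = 2 * Real.sinh (yfun l) ^ 2 := by
  have h : Real.cosh (2 * yfun l) = 2 * Real.sinh (yfun l) ^ 2 + 1 := by
    rw [Real.cosh_two_mul, Real.cosh_sq]
    ring
  have h2 : Real.sqrt (4 * Real.pi * l) / (3 : ℝ) ^ ((1 : ℝ) / 4) = 2 * yfun l := by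
    rw [yfun]; ring
  rw [kappa, h2, h]; ring

lemma yfun_pos (l : ℝ) (hl : 0 < l) : 0 < yfun l := by
  rw [yfun]
  have : (0:ℝ) < Real.sqrt (4 * Real.pi * l) := Real.sqrt_pos.mpr (by positivity)
  positivity

/-- The area 2π·l·sinh(r_max(l))·cosh(r_max(l))
= 2π·l·√S(l)·√(1+S(l)) of the boundary torus of the maximal tube tends
to √3/2 as l → 0⁺. -/
theorem boundary_torus_area_tendsto :
    Tendsto (fun l : ℝ =>
        2 * Real.pi * l * Real.sqrt (Sfun l) * Real.sqrt (1 + Sfun l))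
      (𝓝[>] (0 : ℝ)) (𝓝 (Real.sqrt 3 / 2)) := by
  -- y tends to 0 within ≠ 0
  have hy0 : Tendsto yfun (𝓝[>] (0:ℝ)) (𝓝 0) := by
    have hc : Continuous yfun := by
      unfold yfun
      fun_prop
    have := hc.tendsto 0
    have h0 : yfun 0 = 0 := by simp [yfun]
    rw [h0] at this
    exact this.mono_left nhdsWithin_le_nhds
  have hy : Tendsto yfun (𝓝[>] (0:ℝ)) (𝓝[≠] (0:ℝ)) := by
    rw [tendsto_nhdsWithin_iff]
    refine ⟨hy0, ?_⟩
    filter_upwards [self_mem_nhdsWithin] with l hl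
    exact ne_of_gt (yfun_pos l hl)
  have h2 : Tendsto (fun l => Real.sinh (yfun l) / yfun l) (𝓝[>] (0:ℝ)) (𝓝 1) :=
    sinh_div_self_tendsto.comp hy
  -- A tendsto √3
  have hA : Tendsto (fun l => Real.sqrt 3 * ((Real.sinh (yfun l) / yfun l)⁻¹) ^ 2)
      (𝓝[>] (0:ℝ)) (𝓝 (Real.sqrt 3)) := by
    have := ((h2.inv₀ one_ne_zero).pow 2).const_mul (Real.sqrt 3)
    simpa using this
  -- kappa tends to 0
  have hκ0 : Tendsto kappa (𝓝[>] (0:ℝ)) (𝓝 0) := by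
    have hc : Continuous kappa := by unfold kappa; fun_prop
    have := hc.tendsto 0
    have h0 : kappa 0 = 0 := by simp [kappa]
    rw [h0] at this
    exact this.mono_left nhdsWithin_le_nhds
  -- B tendsto 1/2
  have hB : Tendsto (fun l => (1/2) * (Real.sqrt (1 - 2 * kappa l) - kappa l))
      (𝓝[>] (0:ℝ)) (𝓝 (1/2)) := by
    have hc : Continuous (fun t : ℝ => (1/2) * (Real.sqrt (1 - 2*t) - t)) := by fun_prop
    have := (hc.tendsto 0).comp hκ0
    simpa [Function.comp_def] using this
  -- C tendsto 1
  have hinv : Tendsto (fun l => kappa l / ((1/2) * (Real.sqrt (1 - 2 * kappa l) - kappa l)))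
      (𝓝[>] (0:ℝ)) (𝓝 0) := by
    have := hκ0.div hB (by norm_num)
    simpa [Pi.div_def] using this
  have hC : Tendsto (fun l => Real.sqrt (1 + kappa l / ((1/2) * (Real.sqrt (1 - 2 * kappa l) - kappa l))))
      (𝓝[>] (0:ℝ)) (𝓝 1) := by
    have h1 : Tendsto (fun l => 1 + kappa l / ((1/2) * (Real.sqrt (1 - 2 * kappa l) - kappa l)))
        (𝓝[>] (0:ℝ)) (𝓝 1) := by
      have := hinv.const_add 1
      simpa using this
    have := (Real.continuous_sqrt.tendsto 1).comp h1
    simpa [Function.comp_def] using this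
  -- product
  have hprod := (hA.mul hB).mul hC
  have hlim : Real.sqrt 3 * (1/2) * 1 = Real.sqrt 3 / 2 := by ring
  rw [hlim] at hprod
  refine hprod.congr' ?_
  have hk3 : ∀ᶠ l in 𝓝[>] (0:ℝ), kappa l < 1/3 :=
    hκ0.eventually (eventually_lt_nhds (by norm_num))
  filter_upwards [self_mem_nhdsWithin, hk3] with l hl hk3
  -- pointwise equality
  set k := kappa l with hkdef
  have hy' := yfun_pos l hl
  have hsy : 0 < Real.sinh (yfun l) := Real.sinh_pos_iff.mpr hy'
  have hk : 0 < k := by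
    rw [hkdef, kappa_eq]
    positivity
  have h12 : (0:ℝ) < 1 - 2*k := by linarith
  have hroot : k < Real.sqrt (1 - 2*k) := by
    have h1 : Real.sqrt (1/3) ≤ Real.sqrt (1 - 2*k) := Real.sqrt_le_sqrt (by linarith)
    have h2 : (1:ℝ)/3 < Real.sqrt (1/3) :=
      (Real.lt_sqrt (by norm_num)).mpr (by norm_num)
    linarith
  set B := (1/2) * (Real.sqrt (1 - 2*k) - k) with hBdef
  have hBpos : 0 < B := by rw [hBdef]; linarith
  have hS : Sfun l = B / k := by
    rw [Sfun, hBdef, ← hkdef]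
    field_simp
  have hSpos : 0 < Sfun l := by rw [hS]; positivity
  -- A = 2πl/k
  have hAeq : Real.sqrt 3 * ((Real.sinh (yfun l) / yfun l)⁻¹) ^ 2 = 2 * Real.pi * l / k := by
    rw [hkdef, kappa_eq, yfun_sq l hl]
    field_simp
  have hCeq : Real.sqrt (1 + k / B) = Real.sqrt (1 + Sfun l) / Real.sqrt (Sfun l) := by
    have : 1 + k / B = (1 + Sfun l) / Sfun l := by
      rw [hS]; field_simp; ring
    rw [this, Real.sqrt_div (by positivity)]
  rw [hAeq, hCeq]
  have hkS : 2 * Real.pi * l / k * B = 2 * Real.pi * l * Sfun l := by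
    rw [hS]; field_simp
  rw [hkS]
  have hne : Real.sqrt (Sfun l) ≠ 0 := ne_of_gt (Real.sqrt_pos.mpr hSpos)
  field_simp
  linear_combination (-l) * Real.sq_sqrt hSpos.le
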